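/- Let d₁ = r₁² + s₁² and d₂ = r₂² + s₂² with gcd(r_j, s_j) = 1, −s_j < r_j ≤ s_j, r₁, r₂ of the same sign, and 2/3 ≤ s₁/s₂ ≤ 3/2. Let ν_j be the root mod d_j determined by ν_j · s_j ≡ r_j (mod d_j) (so ν_j² + 1 ≡ 0 mod d_j). If ν₁/d₁ ≢ ν₂/d₂ (mod 1), then the distance from ν₁/d₁ − ν₂/d₂ to the nearest integer exceeds 1/(4·√(d₁·d₂)). -/

import Mathlib

set_option maxHeartbeats 1600000 in
/-- Spacing of the fractions `ν/d` for roots of `ν² + 1 ≡ 0 (mod d)`, `d = r² + s²`.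
If the two fractions are distinct mod 1, with `r₁, r₂` of the same sign and
`2/3 ≤ s₁/s₂ ≤ 3/2`, then their distance to any integer translate exceeds
`1/(4√(d₁ d₂))`. -/
theorem stmt11 (r₁ s₁ r₂ s₂ ν₁ ν₂ : ℤ)
    (h₁ : Int.gcd r₁ s₁ = 1) (h₂ : Int.gcd r₂ s₂ = 1)
    (hr₁ : -s₁ < r₁ ∧ r₁ ≤ s₁) (hr₂ : -s₂ < r₂ ∧ r₂ ≤ s₂)
    (hsign : 0 < r₁ * r₂)
    (hratio : (2 : ℝ) / 3 ≤ (s₁ : ℝ) / (s₂ : ℝ) ∧ (s₁ : ℝ) / (s₂ : ℝ) ≤ 3 / 2)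
    (hν₁ : (r₁ ^ 2 + s₁ ^ 2) ∣ (ν₁ * s₁ - r₁))
    (hν₂ : (r₂ ^ 2 + s₂ ^ 2) ∣ (ν₂ * s₂ - r₂))
    (hroot₁ : (r₁ ^ 2 + s₁ ^ 2) ∣ (ν₁ ^ 2 + 1))
    (hroot₂ : (r₂ ^ 2 + s₂ ^ 2) ∣ (ν₂ ^ 2 + 1))
    (hdistinct : ∀ m : ℤ,
      (ν₁ : ℝ) / ((r₁ : ℝ) ^ 2 + (s₁ : ℝ) ^ 2) - (ν₂ : ℝ) / ((r₂ : ℝ) ^ 2 + (s₂ : ℝ) ^ 2)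
        ≠ (m : ℝ)) :
    ∀ m : ℤ,
      1 / (4 * Real.sqrt (((r₁ : ℝ) ^ 2 + (s₁ : ℝ) ^ 2) * ((r₂ : ℝ) ^ 2 + (s₂ : ℝ) ^ 2)))
        < |(ν₁ : ℝ) / ((r₁ : ℝ) ^ 2 + (s₁ : ℝ) ^ 2)
            - (ν₂ : ℝ) / ((r₂ : ℝ) ^ 2 + (s₂ : ℝ) ^ 2) - (m : ℝ)| := by
  intro m
  obtain ⟨hr₁l, hr₁u⟩ := hr₁
  obtain ⟨hr₂l, hr₂u⟩ := hr₂
  have hs₁ : 0 < s₁ := by linarith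
  have hs₂ : 0 < s₂ := by linarith
  have hr₁0 : r₁ ≠ 0 := by rintro rfl; simp at hsign
  have hr₂0 : r₂ ≠ 0 := by rintro rfl; simp at hsign
  obtain ⟨a₁, ha₁⟩ := hν₁
  obtain ⟨a₂, ha₂⟩ := hν₂
  have hcop₁ : IsCoprime r₁ s₁ := Int.isCoprime_iff_gcd_eq_one.mpr h₁
  have hcop₂ : IsCoprime r₂ s₂ := Int.isCoprime_iff_gcd_eq_one.mpr h₂
  -- s_j ∣ a_j * r_j + 1
  have hd₁ : s₁ ∣ r₁ * (a₁ * r₁ + 1) := ⟨ν₁ - a₁ * s₁, by linear_combination -ha₁⟩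
  have hd₂ : s₂ ∣ r₂ * (a₂ * r₂ + 1) := ⟨ν₂ - a₂ * s₂, by linear_combination -ha₂⟩
  have hds₁ : s₁ ∣ a₁ * r₁ + 1 := (hcop₁.symm).dvd_of_dvd_mul_left hd₁
  have hds₂ : s₂ ∣ a₂ * r₂ + 1 := (hcop₂.symm).dvd_of_dvd_mul_left hd₂
  obtain ⟨c₁, hc₁⟩ := hds₁
  obtain ⟨c₂, hc₂⟩ := hds₂
  have hacop₁ : IsCoprime a₁ s₁ := ⟨-r₁, c₁, by linear_combination -hc₁⟩
  have hacop₂ : IsCoprime a₂ s₂ := ⟨-r₂, c₂, by linear_combination -hc₂⟩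
  set K : ℤ := s₂ * a₁ - s₁ * a₂ - m * (s₁ * s₂) with hK
  clear_value K
  -- real notation
  have hs₁r : (0:ℝ) < (s₁:ℝ) := by exact_mod_cast hs₁
  have hs₂r : (0:ℝ) < (s₂:ℝ) := by exact_mod_cast hs₂
  have hD₁ : (0:ℝ) < (r₁:ℝ)^2 + (s₁:ℝ)^2 := by positivity
  have hD₂ : (0:ℝ) < (r₂:ℝ)^2 + (s₂:ℝ)^2 := by positivity
  have ha₁r : (ν₁:ℝ) * s₁ - r₁ = ((r₁:ℝ)^2 + (s₁:ℝ)^2) * a₁ := by exact_mod_cast ha₁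
  have ha₂r : (ν₂:ℝ) * s₂ - r₂ = ((r₂:ℝ)^2 + (s₂:ℝ)^2) * a₂ := by exact_mod_cast ha₂
  have e₁ : (ν₁:ℝ) / ((r₁:ℝ)^2 + (s₁:ℝ)^2)
      = (r₁:ℝ) / ((s₁:ℝ) * ((r₁:ℝ)^2 + (s₁:ℝ)^2)) + (a₁:ℝ)/(s₁:ℝ) := by
    field_simp
    linear_combination ha₁r
  have e₂ : (ν₂:ℝ) / ((r₂:ℝ)^2 + (s₂:ℝ)^2)
      = (r₂:ℝ) / ((s₂:ℝ) * ((r₂:ℝ)^2 + (s₂:ℝ)^2)) + (a₂:ℝ)/(s₂:ℝ) := by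
    field_simp
    linear_combination ha₂r
  have e₃ : (a₁:ℝ)/(s₁:ℝ) - (a₂:ℝ)/(s₂:ℝ) - (m:ℝ) = (K:ℝ) / ((s₁:ℝ) * (s₂:ℝ)) := by
    have hKr : (K:ℝ) = (s₂:ℝ) * a₁ - (s₁:ℝ) * a₂ - (m:ℝ) * ((s₁:ℝ) * (s₂:ℝ)) := by
      rw [hK]; push_cast; ring
    rw [hKr]; field_simp
  have hkey : (ν₁ : ℝ) / ((r₁ : ℝ) ^ 2 + (s₁ : ℝ) ^ 2)
      - (ν₂ : ℝ) / ((r₂ : ℝ) ^ 2 + (s₂ : ℝ) ^ 2) - (m : ℝ)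
      = (r₁:ℝ) / ((s₁:ℝ) * ((r₁:ℝ)^2 + (s₁:ℝ)^2))
        - (r₂:ℝ) / ((s₂:ℝ) * ((r₂:ℝ)^2 + (s₂:ℝ)^2))
        + (K:ℝ) / ((s₁:ℝ) * (s₂:ℝ)) := by
    rw [e₁, e₂, ← e₃]; ring
  by_cases hK0 : K = 0
  · -- K = 0 leads to a contradiction with hdistinct
    exfalso
    have hK0' : s₂ * a₁ - s₁ * a₂ - m * (s₁ * s₂) = 0 := hK ▸ hK0
    have h1 : s₁ ∣ s₂ * a₁ := ⟨a₂ + m * s₂, by linear_combination hK0'⟩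
    have h2 : s₂ ∣ s₁ * a₂ := ⟨a₁ - m * s₁, by linear_combination -hK0'⟩
    have hs12 : s₁ ∣ s₂ := (hacop₁.symm).dvd_of_dvd_mul_right h1
    have hs21 : s₂ ∣ s₁ := (hacop₂.symm).dvd_of_dvd_mul_right h2
    have hs : s₁ = s₂ := Int.dvd_antisymm hs₁.le hs₂.le hs12 hs21
    have ha : a₁ = a₂ + m * s₁ := by
      have h3 : s₁ * a₁ = s₁ * (a₂ + m * s₁) := by
        subst hs; linear_combination hK0'
      exact mul_left_cancel₀ (by positivity) h3
    -- s₁ ∣ r₁ - r₂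
    have hdr : s₁ ∣ a₁ * (r₁ - r₂) := by
      have h3 : s₁ ∣ a₂ * r₂ + 1 := hs ▸ ⟨c₂, hc₂⟩
      have h4 : s₁ ∣ (a₁ * r₁ + 1) - (a₂ * r₂ + 1) := dvd_sub ⟨c₁, hc₁⟩ h3
      have h5 : (a₁ * r₁ + 1) - (a₂ * r₂ + 1) = s₁ * (m * r₂) + a₁ * (r₁ - r₂) := by
        rw [ha]; ring
      rw [h5] at h4
      exact (dvd_add_right (Dvd.intro _ rfl)).mp h4
    have hrr : s₁ ∣ r₁ - r₂ := (hacop₁.symm).dvd_of_dvd_mul_left hdr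
    have hr12 : r₁ = r₂ := by
      by_contra hne
      have hne' : r₁ - r₂ ≠ 0 := sub_ne_zero.mpr hne
      have hle := Int.le_of_dvd (abs_pos.mpr hne') ((dvd_abs s₁ (r₁ - r₂)).mpr hrr)
      rcases mul_pos_iff.mp hsign with ⟨hp₁, hp₂⟩ | ⟨hn₁, hn₂⟩
      · have habs : |r₁ - r₂| < s₁ := abs_lt.mpr ⟨by omega, by omega⟩
        omega
      · have habs : |r₁ - r₂| < s₁ := abs_lt.mpr ⟨by omega, by omega⟩
        omega
    -- then the difference of the two fractions is an integer
    have hcopds : IsCoprime (r₁ ^ 2 + s₁ ^ 2) s₁ := by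
      have h6 : IsCoprime (r₁ ^ 2 + s₁ * s₁) s₁ := (hcop₁.pow_left).add_mul_left_left s₁
      rwa [← sq] at h6
    have hdvd : (r₁ ^ 2 + s₁ ^ 2) ∣ (ν₁ - ν₂) * s₁ := by
      have h7 : (ν₁ - ν₂) * s₁ = (ν₁ * s₁ - r₁) - (ν₂ * s₂ - r₂) := by
        rw [hr12, hs]; ring
      rw [h7, ha₁, ha₂, hr12, hs]
      exact dvd_sub (Dvd.intro _ rfl) (Dvd.intro _ rfl)
    have hdvd' : (r₁ ^ 2 + s₁ ^ 2) ∣ (ν₁ - ν₂) := hcopds.dvd_of_dvd_mul_right hdvd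
    obtain ⟨c, hc⟩ := hdvd'
    apply hdistinct c
    have hcr : (ν₁:ℝ) - ν₂ = ((r₁:ℝ)^2 + (s₁:ℝ)^2) * c := by exact_mod_cast hc
    have heq : ((r₂:ℝ)^2 + (s₂:ℝ)^2) = ((r₁:ℝ)^2 + (s₁:ℝ)^2) := by
      rw [hr12, hs]
    rw [heq, div_sub_div_same, hcr, mul_comm, mul_div_assoc,
      div_self (ne_of_gt hD₁), mul_one]
  · -- main estimate
    have hK1 : (1:ℝ) ≤ |(K:ℝ)| := by
      have h8 := Int.one_le_abs hK0
      exact_mod_cast h8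
    set S : ℝ := (s₁:ℝ) * (s₂:ℝ) with hS
    have hSpos : 0 < S := mul_pos hs₁r hs₂r
    set t₁ : ℝ := (r₁:ℝ) / ((s₁:ℝ) * ((r₁:ℝ)^2 + (s₁:ℝ)^2)) with ht₁
    set t₂ : ℝ := (r₂:ℝ) / ((s₂:ℝ) * ((r₂:ℝ)^2 + (s₂:ℝ)^2)) with ht₂
    clear_value S t₁ t₂
    have hrat₁ : 2 * (s₂:ℝ) ≤ 3 * s₁ := by
      have h9 := hratio.1
      rw [div_le_div_iff₀ (by norm_num) hs₂r] at h9
      linarith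
    have hrat₂ : 2 * (s₁:ℝ) ≤ 3 * s₂ := by
      have h9 := hratio.2
      rw [div_le_div_iff₀ hs₂r (by norm_num)] at h9
      linarith
    -- |t_j| ≤ 3/(4S)
    have hAM₁ : 2 * |(r₁:ℝ)| * (s₁:ℝ) ≤ (r₁:ℝ)^2 + (s₁:ℝ)^2 := by
      calc 2 * |(r₁:ℝ)| * (s₁:ℝ) ≤ |(r₁:ℝ)|^2 + (s₁:ℝ)^2 := two_mul_le_add_sq _ _
        _ = (r₁:ℝ)^2 + (s₁:ℝ)^2 := by rw [sq_abs]
    have hAM₂ : 2 * |(r₂:ℝ)| * (s₂:ℝ) ≤ (r₂:ℝ)^2 + (s₂:ℝ)^2 := by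
      calc 2 * |(r₂:ℝ)| * (s₂:ℝ) ≤ |(r₂:ℝ)|^2 + (s₂:ℝ)^2 := two_mul_le_add_sq _ _
        _ = (r₂:ℝ)^2 + (s₂:ℝ)^2 := by rw [sq_abs]
    have habs₁ : |t₁| ≤ 3 / (4 * S) := by
      rw [ht₁, hS, abs_div, abs_of_pos (mul_pos hs₁r hD₁),
        div_le_div_iff₀ (mul_pos hs₁r hD₁) (by positivity)]
      linarith [mul_le_mul_of_nonneg_left hrat₁ (mul_nonneg (abs_nonneg (r₁:ℝ)) hs₁r.le),
        mul_le_mul_of_nonneg_left hAM₁ (by positivity : (0:ℝ) ≤ 3 * s₁)]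
    have habs₂ : |t₂| ≤ 3 / (4 * S) := by
      rw [ht₂, hS, abs_div, abs_of_pos (mul_pos hs₂r hD₂),
        div_le_div_iff₀ (mul_pos hs₂r hD₂) (by positivity)]
      linarith [mul_le_mul_of_nonneg_left hrat₂ (mul_nonneg (abs_nonneg (r₂:ℝ)) hs₂r.le),
        mul_le_mul_of_nonneg_left hAM₂ (by positivity : (0:ℝ) ≤ 3 * s₂)]
    have hsub : |t₁ - t₂| ≤ 3 / (4 * S) := by
      obtain ⟨hb₁l, hb₁u⟩ := abs_le.mp habs₁
      obtain ⟨hb₂l, hb₂u⟩ := abs_le.mp habs₂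
      rcases mul_pos_iff.mp hsign with ⟨hp₁, hp₂⟩ | ⟨hn₁, hn₂⟩
      · have h01 : 0 ≤ t₁ := by
          rw [ht₁]
          have : (0:ℝ) ≤ (r₁:ℝ) := by exact_mod_cast hp₁.le
          positivity
        have h02 : 0 ≤ t₂ := by
          rw [ht₂]
          have : (0:ℝ) ≤ (r₂:ℝ) := by exact_mod_cast hp₂.le
          positivity
        exact abs_le.mpr ⟨by linarith, by linarith⟩
      · have h01 : t₁ ≤ 0 := by
          rw [ht₁]
          apply div_nonpos_of_nonpos_of_nonneg
          · exact_mod_cast hn₁.le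
          · positivity
        have h02 : t₂ ≤ 0 := by
          rw [ht₂]
          apply div_nonpos_of_nonpos_of_nonneg
          · exact_mod_cast hn₂.le
          · positivity
        exact abs_le.mpr ⟨by linarith, by linarith⟩
    have hKS : 1 / S ≤ |(K:ℝ) / S| := by
      rw [abs_div, abs_of_pos hSpos]
      gcongr
    have hlow : 1 / (4 * S) ≤ |t₁ - t₂ + (K:ℝ)/S| := by
      have h10 : |(K:ℝ)/S| - |t₁ - t₂| ≤ |t₁ - t₂ + (K:ℝ)/S| := by
        have := abs_sub_abs_le_abs_sub ((K:ℝ)/S) (-(t₁ - t₂))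
        simp only [abs_neg, sub_neg_eq_add] at this
        calc |(K:ℝ)/S| - |t₁ - t₂| ≤ |(K:ℝ)/S + (t₁ - t₂)| := this
          _ = |t₁ - t₂ + (K:ℝ)/S| := by rw [add_comm]
      have h11 : 1/S - 3/(4*S) = 1/(4*S) := by field_simp; ring
      linarith
    rw [hkey]
    have hsq : S < Real.sqrt (((r₁:ℝ)^2 + (s₁:ℝ)^2) * ((r₂:ℝ)^2 + (s₂:ℝ)^2)) := by
      rw [show S = Real.sqrt (S^2) from (Real.sqrt_sq hSpos.le).symm]
      apply Real.sqrt_lt_sqrt (by positivity)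
      have hr₁sq : (1:ℝ) ≤ (r₁:ℝ)^2 := by
        have : (1:ℝ) ≤ |(r₁:ℝ)| := by exact_mod_cast Int.one_le_abs hr₁0
        nlinarith [sq_abs (r₁:ℝ)]
      have hr₂sq : (1:ℝ) ≤ (r₂:ℝ)^2 := by
        have : (1:ℝ) ≤ |(r₂:ℝ)| := by exact_mod_cast Int.one_le_abs hr₂0
        nlinarith [sq_abs (r₂:ℝ)]
      rw [hS]
      have hh1 : (0:ℝ) < (r₁:ℝ)^2 * (s₂:ℝ)^2 := by positivity
      have hh2 : (0:ℝ) ≤ (r₁:ℝ)^2 * (r₂:ℝ)^2 := by positivity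
      have hh3 : (0:ℝ) ≤ (s₁:ℝ)^2 * (r₂:ℝ)^2 := by positivity
      nlinarith [hh1, hh2, hh3]
    have hfinal : 1 / (4 * Real.sqrt (((r₁:ℝ)^2 + (s₁:ℝ)^2) * ((r₂:ℝ)^2 + (s₂:ℝ)^2)))
        < 1 / (4 * S) :=
      one_div_lt_one_div_of_lt (by positivity) (by linarith)
    exact lt_of_lt_of_le hfinal hlow
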